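/- Let X be a nonempty set and let g, h : X → [0,∞) satisfy inf_{x ∈ X} g(x)h(x) = 0. Define the monotone measure μ on all subsets of X by μ(∅) = 0 and μ(B) = 1 for every nonempty B ⊆ X. Then there is no constant c ∈ [0,∞) such that (C)∫_X f dμ ≤ c · ((C)∫_X g f² dμ)^{1/4} · ((C)∫_X h f² dμ)^{1/4} holds for every function f : X → [0,∞) with (C)∫_X f dμ < ∞. -/

import Mathlib

open scoped ENNReal NNReal

/-- The Choquet integral of `f` on `A` with respect to the monotone set
function `μ`: `(C)∫_A f dμ = ∫_0^∞ μ(A ∩ {f ≥ t}) dt`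
(the Lebesgue integral of the nonincreasing function `t ↦ μ(A ∩ {f ≥ t})`). -/
noncomputable def choquet {X : Type*} (μ : Set X → ℝ≥0∞) (f : X → ℝ≥0∞)
    (A : Set X) : ℝ≥0∞ :=
  ∫⁻ t in Set.Ioi (0:ℝ), μ (A ∩ {x | ENNReal.ofReal t ≤ f x})

lemma choquet_of_max {X : Type*} (μ : Set X → ℝ≥0∞)
    (hμ0 : μ ∅ = 0) (hμ1 : ∀ B : Set X, B.Nonempty → μ B = 1)
    (f : X → ℝ≥0∞) (x₀ : X) (hmax : ∀ y, f y ≤ f x₀) (hfin : f x₀ ≠ ∞) :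
    choquet μ f Set.univ = f x₀ := by
  unfold choquet
  have key : ∀ t ∈ Set.Ioi (0:ℝ),
      μ (Set.univ ∩ {x | ENNReal.ofReal t ≤ f x}) =
      Set.indicator (Set.Ioc (0:ℝ) (f x₀).toReal) (fun _ => (1:ℝ≥0∞)) t := by
    intro t ht
    rw [Set.univ_inter]
    by_cases h : ENNReal.ofReal t ≤ f x₀
    · rw [hμ1 _ ⟨x₀, h⟩, Set.indicator_of_mem]
      exact ⟨ht, (ENNReal.ofReal_le_iff_le_toReal hfin).mp h⟩
    · have : {x | ENNReal.ofReal t ≤ f x} = ∅ := by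
        ext x; simp only [Set.mem_setOf_eq, Set.mem_empty_iff_false, iff_false]
        exact fun hx => h (hx.trans (hmax x))
      rw [this, hμ0, Set.indicator_of_notMem]
      intro hmem
      exact h ((ENNReal.ofReal_le_iff_le_toReal hfin).mpr hmem.2)
  rw [MeasureTheory.setLIntegral_congr_fun measurableSet_Ioi
    key]
  rw [MeasureTheory.lintegral_indicator measurableSet_Ioc]
  simp only [MeasureTheory.lintegral_const, MeasureTheory.Measure.restrict_apply
    measurableSet_Ioc, MeasureTheory.Measure.restrict_apply MeasurableSet.univ,
    Set.univ_inter]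
  rw [Set.inter_eq_left.mpr (Set.Ioc_subset_Ioi_self), Real.volume_Ioc]
  simp [ENNReal.ofReal_toReal hfin]

/-- There is no finite constant `c` such that the Carlson type inequality
`(C)∫_X f dμ ≤ c ((C)∫_X g f² dμ)^{1/4} ((C)∫_X h f² dμ)^{1/4}` holds for
every integrable `f`, when `μ(B) = 1` for all nonempty `B`, `μ(∅) = 0` and
`inf_{x ∈ X} g(x)h(x) = 0`. -/
theorem no_carlson_constant_choquet {X : Type*} [Nonempty X]
    -- g, h : X → [0,∞) with inf g·h = 0
    (g h : X → ℝ≥0∞) (hg : ∀ x, g x ≠ ∞) (hh : ∀ x, h x ≠ ∞)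
    (hinf : ⨅ x, g x * h x = 0)
    -- μ(∅) = 0 and μ(B) = 1 for every nonempty B
    (μ : Set X → ℝ≥0∞)
    (hμ0 : μ ∅ = 0) (hμ1 : ∀ B : Set X, B.Nonempty → μ B = 1) :
    ¬ ∃ c : ℝ≥0,
      ∀ f : X → ℝ≥0∞, (∀ x, f x ≠ ∞) → choquet μ f Set.univ < ∞ →
        choquet μ f Set.univ ≤ (c : ℝ≥0∞) *
          (choquet μ (fun x => g x * f x ^ 2) Set.univ) ^ ((1:ℝ)/4) *
          (choquet μ (fun x => h x * f x ^ 2) Set.univ) ^ ((1:ℝ)/4) := by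
  classical
  rintro ⟨c, hc⟩
  set ε : ℝ≥0∞ := ((c : ℝ≥0∞) + 1)⁻¹ ^ (4:ℝ) with hε
  have hc1_ne_top : ((c : ℝ≥0∞) + 1) ≠ ∞ := by simp
  have hεpos : 0 < ε := by
    apply ENNReal.rpow_pos
    · simp [ENNReal.inv_pos, hc1_ne_top]
    · simp [ENNReal.inv_ne_top]
  obtain ⟨x₀, hx₀⟩ : ∃ x, g x * h x < ε := by
    rw [← hinf] at hεpos; exact iInf_lt_iff.mp hεpos
  set f : X → ℝ≥0∞ := fun y => if y = x₀ then 1 else 0 with hf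
  have hfx₀ : f x₀ = 1 := by simp [hf]
  have hfy : ∀ y, y ≠ x₀ → f y = 0 := fun y hy => by simp [hf, hy]
  have hfin : ∀ x, f x ≠ ∞ := by
    intro x; by_cases hx : x = x₀ <;> simp [hf, hx]
  have h1 : choquet μ f Set.univ = 1 := by
    rw [choquet_of_max μ hμ0 hμ1 f x₀ _ (by simp [hfx₀]), hfx₀]
    intro y; by_cases hy : y = x₀ <;> simp [hf, hy]
  have h2 : choquet μ (fun x => g x * f x ^ 2) Set.univ = g x₀ := by
    have := choquet_of_max μ hμ0 hμ1 (fun x => g x * f x ^ 2) x₀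
      (fun y => by by_cases hy : y = x₀ <;> simp [hf, hy])
      (by simp [hfx₀, hg x₀])
    simpa [hfx₀] using this
  have h3 : choquet μ (fun x => h x * f x ^ 2) Set.univ = h x₀ := by
    have := choquet_of_max μ hμ0 hμ1 (fun x => h x * f x ^ 2) x₀
      (fun y => by by_cases hy : y = x₀ <;> simp [hf, hy])
      (by simp [hfx₀, hh x₀])
    simpa [hfx₀] using this
  have hineq := hc f hfin (by rw [h1]; exact ENNReal.one_lt_top)
  rw [h1, h2, h3] at hineq
  have hmulr : (g x₀) ^ ((1:ℝ)/4) * (h x₀) ^ ((1:ℝ)/4)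
      = (g x₀ * h x₀) ^ ((1:ℝ)/4) :=
    (ENNReal.mul_rpow_of_nonneg _ _ (by norm_num)).symm
  have hlt : (g x₀ * h x₀) ^ ((1:ℝ)/4) < ((c : ℝ≥0∞) + 1)⁻¹ := by
    have := ENNReal.rpow_lt_rpow hx₀ (by norm_num : (0:ℝ) < 1/4)
    rwa [hε, ← ENNReal.rpow_mul, show (4:ℝ) * (1/4) = 1 by norm_num,
      ENNReal.rpow_one] at this
  have : (1:ℝ≥0∞) ≤ (c : ℝ≥0∞) * ((c : ℝ≥0∞) + 1)⁻¹ := by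
    calc (1:ℝ≥0∞) ≤ (c : ℝ≥0∞) * ((g x₀) ^ ((1:ℝ)/4) * (h x₀) ^ ((1:ℝ)/4)) := by
          rw [← mul_assoc]; exact hineq
      _ ≤ (c : ℝ≥0∞) * ((c : ℝ≥0∞) + 1)⁻¹ := by
          rw [hmulr]; exact mul_le_mul_right hlt.le _
  have hlast : (c : ℝ≥0∞) * ((c : ℝ≥0∞) + 1)⁻¹ < 1 := by
    rw [mul_comm, ← ENNReal.div_eq_inv_mul,
      ENNReal.div_lt_iff (Or.inl (by simp)) (Or.inl hc1_ne_top), one_mul]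
    exact ENNReal.lt_add_right ENNReal.coe_ne_top one_ne_zero
  exact absurd (this.trans_lt hlast) (lt_irrefl _)
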